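/- Let {w_i} be a {0,1}-valued time-inhomogeneous Markov chain with w_1 = 0, and transition probabilities p_i^{01} = P(w_{i+1} = 1 | w_i = 0) and p_i^{10} = P(w_{i+1} = 0 | w_i = 1). If ∑_{i=1}^∞ p_i^{01} = ∞ and ∑_{i=1}^∞ p_i^{10} < ∞, then w_i converges to 1 almost surely. -/

import Mathlib

open MeasureTheory Filter

section Aux
variable {Ω : Type*} [MeasurableSpace Ω] (μ : Measure Ω) [IsProbabilityMeasure μ]
  (w : ℕ → Ω → Bool) (hw : ∀ n, Measurable (w n))

/-- extension of a finite history to `ℕ → Bool` -/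
private def extv (n : ℕ) (v : Fin (n+1) → Bool) : ℕ → Bool :=
  fun k => if h : k < n + 1 then v ⟨k, h⟩ else false

include hw in
private lemma hist_meas (n : ℕ) (v : ℕ → Bool) :
    MeasurableSet {ω | ∀ k ≤ n, w k ω = v k} := by
  have : {ω | ∀ k ≤ n, w k ω = v k} = ⋂ k ∈ Set.Iic n, (w k) ⁻¹' {v k} := by
    ext ω; simp [Set.mem_iInter]
  rw [this]
  exact MeasurableSet.biInter (Set.to_countable _)
    fun k _ => (hw k) (MeasurableSet.singleton _)

include hw in
private lemma wset_meas (n : ℕ) (b : Bool) : MeasurableSet {ω | w n ω = b} :=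
  (hw n) (MeasurableSet.singleton b)

omit [IsProbabilityMeasure μ] in
include hw in
private lemma partition (n : ℕ) (S : Set Ω) (hS : MeasurableSet S) :
    μ S = ∑ v : Fin (n+1) → Bool, μ (S ∩ {ω | ∀ k ≤ n, w k ω = extv n v k}) := by
  have hcover : S = ⋃ v ∈ (Finset.univ : Finset (Fin (n+1) → Bool)),
      S ∩ {ω | ∀ k ≤ n, w k ω = extv n v k} := by
    ext ω
    simp only [Set.mem_iUnion, Finset.mem_univ, Set.mem_inter_iff, Set.mem_setOf_eq,
      exists_prop, true_and]
    constructor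
    · intro hω
      refine ⟨fun k => w k ω, hω, fun k hk => ?_⟩
      simp [extv, Nat.lt_succ_of_le hk]
    · rintro ⟨v, hω, -⟩; exact hω
  conv_lhs => rw [hcover]
  rw [measure_biUnion_finset]
  · intro v _ v' _ hvv'
    refine Set.disjoint_left.mpr ?_
    rintro ω ⟨-, h1⟩ ⟨-, h2⟩
    apply hvv'
    funext k
    have e1 := h1 k (Nat.lt_succ_iff.mp k.isLt)
    have e2 := h2 k (Nat.lt_succ_iff.mp k.isLt)
    simp only [extv, k.isLt, dif_pos] at e1 e2
    rw [← e1, ← e2]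
  · exact fun v _ => hS.inter (hist_meas w hw n (extv n v))

variable (p01 p10 : ℕ → ℝ)
  (hp01 : ∀ n, p01 n ∈ Set.Icc (0 : ℝ) 1) (hp10 : ∀ n, p10 n ∈ Set.Icc (0 : ℝ) 1)
  (hmarkov : ∀ (n : ℕ) (v : ℕ → Bool),
      0 < μ {ω | ∀ k ≤ n, w k ω = v k} →
      (ProbabilityTheory.cond μ {ω | ∀ k ≤ n, w k ω = v k} {ω | w (n + 1) ω = true}).toReal
        = if v n = true then 1 - p10 n else p01 n)

include hw hp01 hp10 hmarkov in
private lemma key_true (n : ℕ) (v : ℕ → Bool) :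
    μ ({ω | ∀ k ≤ n, w k ω = v k} ∩ {ω | w (n + 1) ω = true})
      = μ {ω | ∀ k ≤ n, w k ω = v k}
        * ENNReal.ofReal (if v n = true then 1 - p10 n else p01 n) := by
  set s := {ω | ∀ k ≤ n, w k ω = v k} with hs
  set r : ℝ := if v n = true then 1 - p10 n else p01 n with hr
  have hr0 : 0 ≤ r := by
    rcases hp01 n with ⟨h1, h2⟩; rcases hp10 n with ⟨h3, h4⟩
    rw [hr]; split <;> linarith
  rcases eq_or_ne (μ s) 0 with h0 | h0
  · rw [measure_inter_null_of_null_left _ h0, h0, zero_mul]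
  · have hmeas : MeasurableSet s := hist_meas w hw n v
    have hpos : 0 < μ s := pos_iff_ne_zero.mpr h0
    have hcond := hmarkov n v hpos
    rw [ProbabilityTheory.cond_apply hmeas] at hcond
    have hfin : μ s ≠ ⊤ := measure_ne_top μ s
    have hfin2 : μ (s ∩ {ω | w (n + 1) ω = true}) ≠ ⊤ := measure_ne_top μ _
    have htoReal : (μ (s ∩ {ω | w (n + 1) ω = true})).toReal = r * (μ s).toReal := by
      rw [ENNReal.toReal_mul, ENNReal.toReal_inv] at hcond
      have hspos : 0 < (μ s).toReal := ENNReal.toReal_pos h0 hfin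
      rw [inv_mul_eq_div, div_eq_iff (ne_of_gt hspos)] at hcond
      rw [hcond, hr]
    calc μ (s ∩ {ω | w (n + 1) ω = true})
        = ENNReal.ofReal ((μ (s ∩ {ω | w (n + 1) ω = true})).toReal) :=
          (ENNReal.ofReal_toReal hfin2).symm
      _ = ENNReal.ofReal (r * (μ s).toReal) := by rw [htoReal]
      _ = ENNReal.ofReal r * ENNReal.ofReal ((μ s).toReal) := ENNReal.ofReal_mul hr0
      _ = μ s * ENNReal.ofReal r := by rw [ENNReal.ofReal_toReal hfin, mul_comm]

include hw hp01 hp10 hmarkov in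
private lemma key_false (n : ℕ) (v : ℕ → Bool) :
    μ ({ω | ∀ k ≤ n, w k ω = v k} ∩ {ω | w (n + 1) ω = false})
      = μ {ω | ∀ k ≤ n, w k ω = v k}
        * ENNReal.ofReal (if v n = true then p10 n else 1 - p01 n) := by
  set s := {ω | ∀ k ≤ n, w k ω = v k} with hs
  set r : ℝ := if v n = true then 1 - p10 n else p01 n with hr
  have hr01 : 0 ≤ r ∧ r ≤ 1 := by
    rcases hp01 n with ⟨h1, h2⟩; rcases hp10 n with ⟨h3, h4⟩
    rw [hr]; constructor <;> [skip; skip] <;> split <;> linarith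
  have hrc : (if v n = true then p10 n else 1 - p01 n) = 1 - r := by
    rw [hr]; split <;> ring
  have hsplit : μ (s ∩ {ω | w (n + 1) ω = true}) + μ (s ∩ {ω | w (n + 1) ω = false}) = μ s := by
    rw [← measure_union _ ((hist_meas w hw n v).inter (wset_meas w hw (n+1) false))]
    · congr 1
      ext ω; by_cases h : w (n+1) ω = true <;> simp [h, Set.mem_inter_iff] <;> tauto
    · exact Set.disjoint_left.mpr (by rintro ω ⟨-, h1⟩ ⟨-, h2⟩; simp_all)
  have hT := key_true μ w hw p01 p10 hp01 hp10 hmarkov n v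
  rw [hrc]
  have hkey : μ s * ENNReal.ofReal (1 - r) + μ s * ENNReal.ofReal r = μ s := by
    rw [← mul_add, ← ENNReal.ofReal_add (by linarith [hr01.1, hr01.2]) hr01.1]
    norm_num
  have hfinT : μ (s ∩ {ω | w (n + 1) ω = true}) ≠ ⊤ := measure_ne_top μ _
  have h1 : μ (s ∩ {ω | w (n + 1) ω = false}) = μ s - μ (s ∩ {ω | w (n + 1) ω = true}) :=
    ENNReal.eq_sub_of_add_eq hfinT (by rw [add_comm]; exact hsplit)
  have h2 : μ s * ENNReal.ofReal (1 - r) = μ s - μ (s ∩ {ω | w (n + 1) ω = true}) :=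
    ENNReal.eq_sub_of_add_eq hfinT (by rw [hT, ← hr]; exact hkey)
  rw [h1, ← h2]

include hw hp01 hp10 hmarkov in
private lemma down_bound (n : ℕ) :
    μ ({ω | w n ω = true} ∩ {ω | w (n + 1) ω = false}) ≤ ENNReal.ofReal (p10 n) := by
  set D := {ω | w n ω = true} ∩ {ω | w (n + 1) ω = false} with hD
  have hDm : MeasurableSet D := (wset_meas w hw n true).inter (wset_meas w hw (n+1) false)
  rw [partition μ w hw n D hDm]
  have hterm : ∀ v : Fin (n+1) → Bool,
      μ (D ∩ {ω | ∀ k ≤ n, w k ω = extv n v k})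
        ≤ μ {ω | ∀ k ≤ n, w k ω = extv n v k} * ENNReal.ofReal (p10 n) := by
    intro v
    by_cases hv : extv n v n = true
    · have hEq : D ∩ {ω | ∀ k ≤ n, w k ω = extv n v k}
          = {ω | ∀ k ≤ n, w k ω = extv n v k} ∩ {ω | w (n + 1) ω = false} := by
        ext ω
        simp only [hD, Set.mem_inter_iff, Set.mem_setOf_eq]
        constructor
        · rintro ⟨⟨-, h2⟩, h3⟩; exact ⟨h3, h2⟩
        · rintro ⟨h3, h2⟩; exact ⟨⟨(h3 n le_rfl).trans hv, h2⟩, h3⟩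
      rw [hEq, key_false μ w hw p01 p10 hp01 hp10 hmarkov n (extv n v), hv, if_pos rfl]
    · have hEq : D ∩ {ω | ∀ k ≤ n, w k ω = extv n v k} = ∅ := by
        ext ω
        simp only [hD, Set.mem_inter_iff, Set.mem_setOf_eq, Set.mem_empty_iff_false, iff_false]
        rintro ⟨⟨h1, -⟩, h3⟩
        exact hv ((h3 n le_rfl).symm.trans h1)
      rw [hEq]; simp
  calc ∑ v : Fin (n+1) → Bool, μ (D ∩ {ω | ∀ k ≤ n, w k ω = extv n v k})
      ≤ ∑ v : Fin (n+1) → Bool,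
          μ {ω | ∀ k ≤ n, w k ω = extv n v k} * ENNReal.ofReal (p10 n) :=
        Finset.sum_le_sum fun v _ => hterm v
    _ = (∑ v : Fin (n+1) → Bool, μ {ω | ∀ k ≤ n, w k ω = extv n v k})
          * ENNReal.ofReal (p10 n) := by rw [Finset.sum_mul]
    _ = μ (Set.univ) * ENNReal.ofReal (p10 n) := by
        rw [partition μ w hw n Set.univ MeasurableSet.univ]; simp
    _ = ENNReal.ofReal (p10 n) := by simp

include hw hp01 hp10 hmarkov in
private lemma stay_bound (m j : ℕ) :
    μ (⋂ k ∈ Set.Icc m (m + j), {ω | w k ω = false})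
      ≤ ∏ k ∈ Finset.Ico m (m + j), ENNReal.ofReal (1 - p01 k) := by
  induction j with
  | zero => simpa using prob_le_one
  | succ j ih =>
    set n := m + j with hn
    set F := ⋂ k ∈ Set.Icc m n, {ω | w k ω = false} with hF
    have hFm : MeasurableSet F :=
      MeasurableSet.biInter (Set.to_countable _) fun k _ => wset_meas w hw k false
    have hstep : (⋂ k ∈ Set.Icc m (m + (j+1)), {ω | w k ω = false})
        = F ∩ {ω | w (n + 1) ω = false} := by
      ext ω
      simp only [hF, Set.mem_iInter, Set.mem_inter_iff, Set.mem_setOf_eq, Set.mem_Icc]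
      constructor
      · intro h
        exact ⟨fun k hk => h k ⟨hk.1, by omega⟩, h (n+1) ⟨by omega, by omega⟩⟩
      · rintro ⟨h1, h2⟩ k hk
        rcases Nat.lt_or_ge k (n+1) with hlt | hge
        · exact h1 k ⟨hk.1, by omega⟩
        · have : k = n + 1 := by omega
          rw [this]; exact h2
    rw [hstep]
    have hFN : MeasurableSet (F ∩ {ω | w (n + 1) ω = false}) :=
      hFm.inter (wset_meas w hw (n+1) false)
    rw [partition μ w hw n _ hFN]
    have hterm : ∀ v : Fin (n+1) → Bool,
        μ (F ∩ {ω | w (n + 1) ω = false} ∩ {ω | ∀ k ≤ n, w k ω = extv n v k})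
          ≤ μ (F ∩ {ω | ∀ k ≤ n, w k ω = extv n v k}) * ENNReal.ofReal (1 - p01 n) := by
      intro v
      set s := {ω | ∀ k ≤ n, w k ω = extv n v k} with hsdef
      by_cases hv : ∀ k, m ≤ k → k ≤ n → extv n v k = false
      · have hsub : s ⊆ F := by
          intro ω hω
          simp only [hF, Set.mem_iInter, Set.mem_setOf_eq, Set.mem_Icc]
          rintro k ⟨hk1, hk2⟩
          rw [hω k hk2]; exact hv k hk1 hk2
        have h1 : F ∩ {ω | w (n + 1) ω = false} ∩ s = s ∩ {ω | w (n + 1) ω = false} := by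
          rw [Set.inter_right_comm, Set.inter_comm F s, Set.inter_eq_left.mpr hsub]
        have h2 : F ∩ s = s := by rw [Set.inter_comm, Set.inter_eq_left.mpr hsub]
        rw [h1, h2, key_false μ w hw p01 p10 hp01 hp10 hmarkov n (extv n v)]
        have hvn : extv n v n = false := hv n (by omega) le_rfl
        rw [hvn]
        simp
        exact le_rfl
      · push_neg at hv
        obtain ⟨k, hk1, hk2, hk3⟩ := hv
        have hempty : F ∩ s = ∅ := by
          ext ω
          simp only [hF, hsdef, Set.mem_inter_iff, Set.mem_iInter, Set.mem_setOf_eq,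
            Set.mem_Icc, Set.mem_empty_iff_false, iff_false, not_and]
          intro h1 h2
          have e1 := h1 k ⟨hk1, hk2⟩
          have e2 := h2 k hk2
          rw [e1] at e2
          simp at e2; exact hk3 e2
        have : F ∩ {ω | w (n + 1) ω = false} ∩ s ⊆ F ∩ s := by
          intro ω hω; exact ⟨hω.1.1, hω.2⟩
        calc μ (F ∩ {ω | w (n + 1) ω = false} ∩ s) ≤ μ (F ∩ s) := measure_mono this
          _ = 0 := by rw [hempty]; simp
          _ ≤ _ := zero_le
    calc ∑ v : Fin (n+1) → Bool,
          μ (F ∩ {ω | w (n + 1) ω = false} ∩ {ω | ∀ k ≤ n, w k ω = extv n v k})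
        ≤ ∑ v : Fin (n+1) → Bool,
            μ (F ∩ {ω | ∀ k ≤ n, w k ω = extv n v k}) * ENNReal.ofReal (1 - p01 n) :=
          Finset.sum_le_sum fun v _ => hterm v
      _ = (∑ v : Fin (n+1) → Bool, μ (F ∩ {ω | ∀ k ≤ n, w k ω = extv n v k}))
            * ENNReal.ofReal (1 - p01 n) := by rw [Finset.sum_mul]
      _ = μ F * ENNReal.ofReal (1 - p01 n) := by rw [← partition μ w hw n F hFm]
      _ ≤ (∏ k ∈ Finset.Ico m (m + j), ENNReal.ofReal (1 - p01 k))
            * ENNReal.ofReal (1 - p01 n) := mul_le_mul_left ih _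
      _ = ∏ k ∈ Finset.Ico m (m + (j+1)), ENNReal.ofReal (1 - p01 k) := by
          rw [show m + (j+1) = (m + j) + 1 from rfl,
            Finset.prod_Ico_succ_top (Nat.le_add_right m j)]

end Aux

/-- For a `{0,1}`-valued time-inhomogeneous Markov chain started at `0`, if the transition
probabilities satisfy `∑ p_i^{01} = ∞` and `∑ p_i^{10} < ∞`, then `w_i → 1` almost surely. -/
theorem stmt_14 {Ω : Type*} [MeasurableSpace Ω] (μ : Measure Ω) [IsProbabilityMeasure μ]
    (w : ℕ → Ω → Bool) (hw : ∀ n, Measurable (w n))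
    (hw0 : ∀ᵐ ω ∂μ, w 0 ω = false)
    (p01 p10 : ℕ → ℝ)
    (hp01 : ∀ n, p01 n ∈ Set.Icc (0 : ℝ) 1) (hp10 : ∀ n, p10 n ∈ Set.Icc (0 : ℝ) 1)
    -- Markov chain with the given transition probabilities
    (hmarkov : ∀ (n : ℕ) (v : ℕ → Bool),
      0 < μ {ω | ∀ k ≤ n, w k ω = v k} →
      (ProbabilityTheory.cond μ {ω | ∀ k ≤ n, w k ω = v k} {ω | w (n + 1) ω = true}).toReal
        = if v n = true then 1 - p10 n else p01 n)
    (hdiv : ¬ Summable p01) (hconv : Summable p10) :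
    ∀ᵐ ω ∂μ, ∀ᶠ n in atTop, w n ω = true := by
  -- Part 1 : Borel–Cantelli — only finitely many 1→0 transitions
  set D : ℕ → Set Ω := fun n => {ω | w n ω = true} ∩ {ω | w (n + 1) ω = false} with hDdef
  have hBC : ∀ᵐ ω ∂μ, ∀ᶠ n in atTop, ω ∉ D n := by
    apply ae_eventually_notMem
    have hle : ∑' n, μ (D n) ≤ ∑' n, ENNReal.ofReal (p10 n) :=
      ENNReal.tsum_le_tsum fun n => down_bound μ w hw p01 p10 hp01 hp10 hmarkov n
    have : ∑' n, ENNReal.ofReal (p10 n) ≠ ⊤ := by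
      rw [← ENNReal.ofReal_tsum_of_nonneg (fun n => (hp10 n).1) hconv]
      exact ENNReal.ofReal_ne_top
    exact ne_top_of_le_ne_top this hle
  -- Part 2 : from any time on, the chain a.s. hits `true`
  have hE : ∀ m : ℕ, μ {ω | ∀ n, m ≤ n → w n ω = false} = 0 := by
    intro m
    set E := {ω | ∀ n, m ≤ n → w n ω = false} with hEdef
    -- E is contained in every finite stay set
    have hsub : ∀ j, E ⊆ ⋂ k ∈ Set.Icc m (m + j), {ω | w k ω = false} := by
      intro j ω hω
      simp only [Set.mem_iInter, Set.mem_setOf_eq, Set.mem_Icc]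
      exact fun k hk => hω k hk.1
    have hbd : ∀ j, μ E ≤ ∏ k ∈ Finset.Ico m (m + j), ENNReal.ofReal (1 - p01 k) :=
      fun j => (measure_mono (hsub j)).trans
        (stay_bound μ w hw p01 p10 hp01 hp10 hmarkov m j)
    -- the products tend to 0
    have hsums : Tendsto (fun n => ∑ i ∈ Finset.range n, p01 i) atTop atTop :=
      (not_summable_iff_tendsto_nat_atTop_of_nonneg (fun n => (hp01 n).1)).mp hdiv
    have hsum2 : Tendsto (fun j => ∑ k ∈ Finset.Ico m (m + j), p01 k) atTop atTop := by
      have heq : ∀ j, ∑ k ∈ Finset.Ico m (m + j), p01 k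
          = (∑ i ∈ Finset.range (m + j), p01 i) - ∑ i ∈ Finset.range m, p01 i := by
        intro j
        rw [Finset.sum_Ico_eq_sub _ (Nat.le_add_right m j)]
      simp only [heq]
      apply tendsto_atTop_add_const_right
      exact hsums.comp (tendsto_atTop_mono (fun j => Nat.le_add_left j m) tendsto_id)
    have hrprod : Tendsto (fun j => ∏ k ∈ Finset.Ico m (m + j), (1 - p01 k)) atTop (nhds 0) := by
      apply squeeze_zero
      · exact fun j => Finset.prod_nonneg fun k _ => by linarith [(hp01 k).2]
      · intro j
        calc ∏ k ∈ Finset.Ico m (m + j), (1 - p01 k)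
            ≤ ∏ k ∈ Finset.Ico m (m + j), Real.exp (-(p01 k)) :=
              Finset.prod_le_prod (fun k _ => by linarith [(hp01 k).2])
                (fun k _ => by linarith [Real.add_one_le_exp (-(p01 k))])
          _ = Real.exp (-(∑ k ∈ Finset.Ico m (m + j), p01 k)) := by
              rw [← Real.exp_sum, Finset.sum_neg_distrib]
      · exact Real.tendsto_exp_atBot.comp (tendsto_neg_atBot_iff.mpr hsum2)
    have hprod : Tendsto (fun j => ∏ k ∈ Finset.Ico m (m + j), ENNReal.ofReal (1 - p01 k))
        atTop (nhds 0) := by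
      have : ∀ j, ∏ k ∈ Finset.Ico m (m + j), ENNReal.ofReal (1 - p01 k)
          = ENNReal.ofReal (∏ k ∈ Finset.Ico m (m + j), (1 - p01 k)) := fun j =>
        (ENNReal.ofReal_prod_of_nonneg fun k _ => by linarith [(hp01 k).2]).symm
      simp only [this]
      simpa using ENNReal.tendsto_ofReal hrprod
    have : μ E ≤ 0 := ge_of_tendsto' hprod hbd
    exact le_antisymm this zero_le
  have hhit : ∀ᵐ ω ∂μ, ∀ m : ℕ, ∃ n, m ≤ n ∧ w n ω = true := by
    rw [ae_all_iff]
    intro m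
    rw [ae_iff]
    apply measure_mono_null _ (hE m)
    intro ω hω
    simp only [Set.mem_setOf_eq, not_exists, not_and] at hω ⊢
    intro n hn
    rcases Bool.eq_false_or_eq_true (w n ω) with h | h
    · exact absurd h (hω n hn)
    · exact h
  -- combine
  filter_upwards [hBC, hhit] with ω h1 h2
  obtain ⟨N, hN⟩ := eventually_atTop.mp h1
  obtain ⟨n, hn, hwn⟩ := h2 N
  rw [eventually_atTop]
  refine ⟨n, ?_⟩
  intro j hj
  induction j with
  | zero =>
    have : n = 0 := Nat.le_zero.mp hj
    rw [← this]; exact hwn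
  | succ j ihj =>
    rcases Nat.lt_or_ge n (j+1) with hlt | hge
    · have hjn : n ≤ j := by omega
      have hwj : w j ω = true := ihj hjn
      rcases Bool.eq_false_or_eq_true (w (j+1) ω) with h | h
      · exact h
      · exfalso
        exact hN j (le_trans hn hjn) ⟨hwj, h⟩
    · have : n = j + 1 := by omega
      rw [← this]; exact hwn
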